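/- For fixed m ≥ 2, Σ_{k₁+⋯+k_m = n, k_i ≥ 1} 1/(√(k₁⋯k_m) · (k₁+1)) = O(n^{m/2 − 3/2}). -/

import Mathlib

open Finset


lemma sqrt_pow_eq (n : ℕ) (a : ℕ) : Real.sqrt n ^ a = (n:ℝ) ^ ((a:ℝ)/2) := by
  rw [Real.sqrt_eq_rpow, ← Real.rpow_natCast ((n:ℝ)^((1:ℝ)/2)) a,
    ← Real.rpow_mul (by positivity)]
  rw [show (1/2:ℝ) * a = (a:ℝ)/2 by ring]



lemma sum_inv_sqrt_le (n : ℕ) : ∑ x ∈ Icc 1 n, 1 / Real.sqrt x ≤ 2 * Real.sqrt n := by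
  induction n with
  | zero => simp
  | succ n ih =>
    rw [Finset.sum_Icc_succ_top (by omega)]
    have ha : Real.sqrt n ^ 2 = n := Real.sq_sqrt (by positivity)
    have hb : Real.sqrt (n+1:ℕ) ^ 2 = (n+1:ℕ) := Real.sq_sqrt (by positivity)
    have hbp : 0 < Real.sqrt (n+1:ℕ) := Real.sqrt_pos.2 (by positivity)
    have hap : 0 ≤ Real.sqrt n := Real.sqrt_nonneg _
    have key : 1 / Real.sqrt (n+1:ℕ) ≤ 2 * Real.sqrt (n+1:ℕ) - 2 * Real.sqrt n := by
      rw [div_le_iff₀ hbp]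
      have hc : ((n+1 : ℕ):ℝ) = (n : ℝ) + 1 := by push_cast; ring
      nlinarith [sq_nonneg (Real.sqrt n - Real.sqrt (n+1:ℕ))]
    linarith

lemma sum_inv_cube_le (n : ℕ) : ∑ x ∈ Icc 1 n, 1 / ((x:ℝ) * Real.sqrt x) ≤ 3 := by
  have main : ∀ n : ℕ, 1 ≤ n → ∑ x ∈ Icc 1 n, 1 / ((x:ℝ) * Real.sqrt x) ≤ 3 - 2 / Real.sqrt n := by
    intro n hn
    induction n with
    | zero => omega
    | succ n ih =>
      rcases Nat.eq_or_lt_of_le hn with h1 | h1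
      · have hn0 : n = 0 := by omega
        subst hn0
        norm_num [Real.sqrt_one]
      · have hn1 : 1 ≤ n := by omega
        rw [Finset.sum_Icc_succ_top (by omega)]
        have ih' := ih hn1
        have hc : ((n+1 : ℕ):ℝ) = (n : ℝ) + 1 := by push_cast; ring
        rw [hc]
        set a := Real.sqrt n with ha_def
        set b := Real.sqrt ((n:ℝ)+1) with hb_def
        have hcs : Real.sqrt ((n+1:ℕ):ℝ) = b := by rw [hc]
        have ha : a ^ 2 = n := Real.sq_sqrt (by positivity)
        have hb : b ^ 2 = (n:ℝ)+1 := Real.sq_sqrt (by positivity)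
        have hap : 0 < a := Real.sqrt_pos.2 (by positivity)
        have hbp : 0 < b := Real.sqrt_pos.2 (by positivity)
        have hab : a ≤ b := Real.sqrt_le_sqrt (by linarith)
        have hdiff : (b - a) * (b + a) = 1 := by nlinarith
        have e1 : a*a*b ≤ b*b*b := by nlinarith
        have e2 : a*(b*b) ≤ b*(b*b) := by nlinarith
        have h3 : a*b*(a+b) ≤ 2*b^3 := by nlinarith
        have h4 : a*b ≤ 2*(b-a)*b^3 := by
          have h5 := mul_le_mul_of_nonneg_left h3 (sub_nonneg.2 hab)
          nlinarith
        have key : 1 / (((n:ℝ)+1) * b) ≤ 2 / a - 2 / b := by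
          rw [div_sub_div _ _ (ne_of_gt hap) (ne_of_gt hbp),
            div_le_div_iff₀ (by positivity) (by positivity)]
          nlinarith
        clear hcs
        linarith
  rcases Nat.eq_zero_or_pos n with h | h
  · simp [h]
  · have h1 := main n h
    have h2 : 0 < 2 / Real.sqrt n := by positivity
    linarith

private lemma sum_update_le_prod {m n : ℕ} (hn : 1 ≤ n) (A : Finset (Fin m → ℕ))
    (hA : ∀ k ∈ A, (∑ i, k i = n) ∧ ∀ i, 1 ≤ k i) (j : Fin m) (G : Fin m → ℕ → ℝ)
    (hG0 : ∀ i x, 0 ≤ G i x) :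
    ∑ k ∈ A, ∏ i, G i (Function.update k j 1 i) ≤ ∏ i, ∑ x ∈ Icc 1 n, G i x := by
  rw [Finset.prod_univ_sum]
  have hinj : ∀ x ∈ A, ∀ y ∈ A, Function.update x j 1 = Function.update y j 1 → x = y := by
    intro x hx y hy hxy
    obtain ⟨hxs, -⟩ := hA x hx
    obtain ⟨hys, -⟩ := hA y hy
    have h1 : ∀ i, i ≠ j → x i = y i := by
      intro i hij
      have := congrFun hxy i
      rwa [Function.update_of_ne hij, Function.update_of_ne hij] at this
    funext i
    by_cases hij : i = j
    · subst hij
      have e1 := Finset.add_sum_erase univ x (Finset.mem_univ i)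
      have e2 := Finset.add_sum_erase univ y (Finset.mem_univ i)
      have es : ∑ i' ∈ univ.erase i, x i' = ∑ i' ∈ univ.erase i, y i' :=
        Finset.sum_congr rfl fun i' hi' => h1 i' (Finset.ne_of_mem_erase hi')
      omega
    · exact h1 i hij
  rw [← Finset.sum_image (f := fun v => ∏ i, G i (v i)) hinj]
  apply Finset.sum_le_sum_of_subset_of_nonneg
  · intro v hv
    obtain ⟨k, hk, rfl⟩ := Finset.mem_image.1 hv
    obtain ⟨hks, hkp⟩ := hA k hk
    rw [Fintype.mem_piFinset]
    intro i
    by_cases hij : i = j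
    · subst hij; rw [Function.update_self]; exact Finset.mem_Icc.2 ⟨le_rfl, hn⟩
    · rw [Function.update_of_ne hij]
      refine Finset.mem_Icc.2 ⟨hkp i, ?_⟩
      calc k i ≤ ∑ i', k i' := Finset.single_le_sum (fun _ _ => Nat.zero_le _) (Finset.mem_univ i)
        _ = n := hks
  · intro v _ _; exact Finset.prod_nonneg fun i _ => hG0 i (v i)

private lemma aux_step3 (m : ℕ) (hm : 2 ≤ m) (hm0 : 0 < m) (z : Fin m) (n : ℕ) (hn : 1 ≤ n)
    (hn0 : (0:ℝ) < n) (hn1 : (1:ℝ) ≤ n) (A : Finset (Fin m → ℕ))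
    (hmem : ∀ k ∈ A, (∑ i, k i = n) ∧ ∀ i, 1 ≤ k i) :
    ∀ j : Fin m, (∑ k ∈ A.filter (fun k => n ≤ m * k j),
      1 / (Real.sqrt (∏ i, (k i : ℝ)) * ((k z : ℝ) + 1))) ≤
      (3 * m * Real.sqrt m * 2^(m-1)) * (n:ℝ) ^ ((m:ℝ)/2 - 3/2) := by
  intro j
  have hD : (0:ℝ) < 3 * m * Real.sqrt m * 2^(m-1) := by positivity
  have hm1 : (1:ℝ) ≤ (m:ℝ) := by exact_mod_cast hm0
  have hsqrtprod : ∀ k : Fin m → ℕ, Real.sqrt (∏ i, (k i:ℝ)) = ∏ i, Real.sqrt ((k i:ℝ)) := by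
    intro k
    rw [Real.sqrt_eq_rpow, ← Real.finset_prod_rpow univ _ (fun i _ => by positivity) _]
    exact Finset.prod_congr rfl fun i _ => (Real.sqrt_eq_rpow _).symm
  have hAmem : ∀ k ∈ A.filter (fun k => n ≤ m * k j), (∑ i, k i = n) ∧ ∀ i, 1 ≤ k i :=
    fun k hk => hmem k (Finset.mem_of_mem_filter k hk)
  by_cases hjz : j = z
  · subst hjz
    set G : Fin m → ℕ → ℝ :=
      fun i x => if i = j then (if x = 1 then (1:ℝ) else 0) else 1/Real.sqrt x with hGdef
    have hG0 : ∀ i x, 0 ≤ G i x := by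
      intro i x; simp only [hGdef]; split_ifs <;> positivity
    have hc0 : (0:ℝ) ≤ (m:ℝ) * Real.sqrt m / ((n:ℝ) * Real.sqrt n) := by positivity
    have hpt : ∀ k ∈ A.filter (fun k => n ≤ m * k j),
        1 / (Real.sqrt (∏ i, (k i : ℝ)) * ((k j : ℝ) + 1)) ≤
        ((m:ℝ) * Real.sqrt m / ((n:ℝ) * Real.sqrt n)) * ∏ i, G i (Function.update k j 1 i) := by
      intro k hk
      have hkj : n ≤ m * k j := by
        have := (Finset.mem_filter.1 hk).2
        exact this
      obtain ⟨hks, hkp⟩ := hAmem k hk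
      have hkz1 : (1:ℝ) ≤ (k j:ℝ) := by exact_mod_cast hkp j
      have hszp : 0 < Real.sqrt ((k j:ℝ)) := Real.sqrt_pos.2 (by linarith)
      have hR : (∏ i, G i (Function.update k j 1 i)) =
          ∏ i ∈ univ.erase j, 1/Real.sqrt ((k i:ℝ)) := by
        rw [← Finset.mul_prod_erase univ _ (Finset.mem_univ j)]
        have h1 : G j (Function.update k j 1 j) = 1 := by
          simp [hGdef, Function.update_self]
        rw [h1, one_mul]
        refine Finset.prod_congr rfl fun i hi => ?_
        have hiz : i ≠ j := Finset.ne_of_mem_erase hi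
        rw [Function.update_of_ne hiz]
        simp [hGdef, hiz]
      have hPinv : (∏ i ∈ univ.erase j, 1/Real.sqrt ((k i:ℝ))) =
          (∏ i ∈ univ.erase j, Real.sqrt ((k i:ℝ)))⁻¹ := by
        rw [← Finset.prod_inv_distrib]
        exact Finset.prod_congr rfl fun _ _ => one_div _
      have hL : 1 / (Real.sqrt (∏ i, (k i : ℝ)) * ((k j : ℝ) + 1)) =
          1/(Real.sqrt ((k j:ℝ)) * ((k j:ℝ)+1)) * ∏ i ∈ univ.erase j, 1/Real.sqrt ((k i:ℝ)) := by
        rw [hsqrtprod k,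
          ← Finset.mul_prod_erase univ (fun i => Real.sqrt ((k i:ℝ))) (Finset.mem_univ j), hPinv]
        simp only [one_div, mul_inv]
        ring
      rw [hL, hR]
      apply mul_le_mul_of_nonneg_right ?_ (Finset.prod_nonneg fun i _ => by positivity)
      rw [div_le_div_iff₀ (mul_pos hszp (by linarith)) (by positivity)]
      have hna : (n:ℝ) ≤ (m:ℝ)*((k j:ℝ)) := by exact_mod_cast hkj
      have h1 : (n:ℝ) * Real.sqrt n ≤ ((m:ℝ)*(k j:ℝ)) * Real.sqrt ((m:ℝ)*(k j:ℝ)) :=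
        mul_le_mul hna (Real.sqrt_le_sqrt hna) (Real.sqrt_nonneg _) (by positivity)
      rw [Real.sqrt_mul (by positivity) _] at h1
      nlinarith [mul_nonneg (mul_nonneg (show (0:ℝ) ≤ (m:ℝ) by positivity)
        (Real.sqrt_nonneg (m:ℝ))) hszp.le]
    have hsum1 : (∏ i, ∑ x ∈ Icc 1 n, G i x) ≤ (2*Real.sqrt n)^(m-1) := by
      rw [← Finset.mul_prod_erase univ _ (Finset.mem_univ j)]
      have h1 : (∑ x ∈ Icc 1 n, G j x) = 1 := by
        simp [hGdef, Finset.sum_ite_eq', Finset.mem_Icc, hn]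
      rw [h1, one_mul]
      calc ∏ i ∈ univ.erase j, ∑ x ∈ Icc 1 n, G i x
          ≤ ∏ _i ∈ univ.erase j, (2*Real.sqrt n) := by
            refine Finset.prod_le_prod (fun i _ => Finset.sum_nonneg fun x _ => hG0 i x)
              (fun i hi => ?_)
            have hiz : i ≠ j := Finset.ne_of_mem_erase hi
            have : ∀ x ∈ Icc 1 n, G i x = 1/Real.sqrt x := fun x _ => by simp [hGdef, hiz]
            rw [Finset.sum_congr rfl this]
            exact sum_inv_sqrt_le n
        _ = (2*Real.sqrt n)^(m-1) := by
            rw [Finset.prod_const, Finset.card_erase_of_mem (Finset.mem_univ j),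
              Finset.card_univ, Fintype.card_fin]
    have e2 : Real.sqrt (n:ℝ)^(m-1) = (n:ℝ)^((((m-1:ℕ)):ℝ)/2) := sqrt_pow_eq n (m-1)
    have e3 : (((m-1:ℕ)):ℝ) = (m:ℝ)-1 := by
      rw [Nat.cast_sub (by omega), Nat.cast_one]
    have e1 : (n:ℝ) * Real.sqrt n = (n:ℝ)^((3:ℝ)/2) := by
      have h := sqrt_pow_eq n 3
      rw [pow_succ, Real.sq_sqrt (by positivity)] at h
      rw [h]; norm_num
    calc (∑ k ∈ A.filter (fun k => n ≤ m * k j),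
          1 / (Real.sqrt (∏ i, (k i : ℝ)) * ((k j : ℝ) + 1)))
        ≤ ∑ k ∈ A.filter (fun k => n ≤ m * k j),
            ((m:ℝ) * Real.sqrt m / ((n:ℝ) * Real.sqrt n)) * ∏ i, G i (Function.update k j 1 i) :=
          Finset.sum_le_sum hpt
      _ = ((m:ℝ) * Real.sqrt m / ((n:ℝ) * Real.sqrt n)) *
            ∑ k ∈ A.filter (fun k => n ≤ m * k j), ∏ i, G i (Function.update k j 1 i) := by
          rw [← Finset.mul_sum]
      _ ≤ ((m:ℝ) * Real.sqrt m / ((n:ℝ) * Real.sqrt n)) * ∏ i, ∑ x ∈ Icc 1 n, G i x :=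
          mul_le_mul_of_nonneg_left (sum_update_le_prod hn _ hAmem j G hG0) hc0
      _ ≤ ((m:ℝ) * Real.sqrt m / ((n:ℝ) * Real.sqrt n)) * (2*Real.sqrt n)^(m-1) :=
          mul_le_mul_of_nonneg_left hsum1 hc0
      _ = ((m:ℝ)*Real.sqrt m*2^(m-1)) * ((n:ℝ)^(((m:ℝ)-1)/2) / (n:ℝ)^((3:ℝ)/2)) := by
          rw [mul_pow, e2, e3, e1]; ring
      _ = ((m:ℝ)*Real.sqrt m*2^(m-1)) * (n:ℝ)^(((m:ℝ)-1)/2 - 3/2) := by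
          rw [← Real.rpow_sub hn0]
      _ = ((m:ℝ)*Real.sqrt m*2^(m-1)) * (n:ℝ)^((m:ℝ)/2 - 2) := by
          rw [show ((m:ℝ)-1)/2 - 3/2 = (m:ℝ)/2-2 by ring]
      _ ≤ (3 * m * Real.sqrt m * 2^(m-1)) * (n:ℝ) ^ ((m:ℝ)/2 - 3/2) := by
          apply mul_le_mul ?_ (Real.rpow_le_rpow_of_exponent_le hn1 (by linarith))
            (Real.rpow_nonneg hn0.le _) hD.le
          nlinarith [mul_nonneg (mul_nonneg (show (0:ℝ) ≤ (m:ℝ) by positivity)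
            (Real.sqrt_nonneg (m:ℝ)))
            (pow_nonneg (by norm_num : (0:ℝ) ≤ 2) (m-1))]
  · have hzj : z ≠ j := fun h => hjz h.symm
    have hzmem : z ∈ univ.erase j := Finset.mem_erase.2 ⟨hzj, Finset.mem_univ z⟩
    set G : Fin m → ℕ → ℝ := fun i x => if i = j then (if x = 1 then (1:ℝ) else 0)
      else if i = z then 1/((x:ℝ)*Real.sqrt x) else 1/Real.sqrt x with hGdef
    have hG0 : ∀ i x, 0 ≤ G i x := by
      intro i x; simp only [hGdef]; split_ifs <;> positivity
    have hc0 : (0:ℝ) ≤ Real.sqrt m / Real.sqrt n := by positivity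
    have hpt : ∀ k ∈ A.filter (fun k => n ≤ m * k j),
        1 / (Real.sqrt (∏ i, (k i : ℝ)) * ((k z : ℝ) + 1)) ≤
        (Real.sqrt m / Real.sqrt n) * ∏ i, G i (Function.update k j 1 i) := by
      intro k hk
      have hkj : n ≤ m * k j := (Finset.mem_filter.1 hk).2
      obtain ⟨hks, hkp⟩ := hAmem k hk
      have hkz1 : (1:ℝ) ≤ (k z:ℝ) := by exact_mod_cast hkp z
      have hkj1 : (1:ℝ) ≤ (k j:ℝ) := by exact_mod_cast hkp j
      have hszp : 0 < Real.sqrt ((k z:ℝ)) := Real.sqrt_pos.2 (by linarith)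
      have hsjp : 0 < Real.sqrt ((k j:ℝ)) := Real.sqrt_pos.2 (by linarith)
      have hR : (∏ i, G i (Function.update k j 1 i)) =
          (1/((k z:ℝ)*Real.sqrt ((k z:ℝ)))) *
            ∏ i ∈ (univ.erase j).erase z, 1/Real.sqrt ((k i:ℝ)) := by
        rw [← Finset.mul_prod_erase univ _ (Finset.mem_univ j)]
        have h1 : G j (Function.update k j 1 j) = 1 := by
          simp [hGdef, Function.update_self]
        rw [h1, one_mul, ← Finset.mul_prod_erase (univ.erase j) _ hzmem]
        congr 1
        · rw [Function.update_of_ne hzj]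
          simp [hGdef, hzj]
        · refine Finset.prod_congr rfl fun i hi => ?_
          have hiz : i ≠ z := Finset.ne_of_mem_erase hi
          have hij : i ≠ j := Finset.ne_of_mem_erase (Finset.mem_of_mem_erase hi)
          rw [Function.update_of_ne hij]
          simp [hGdef, hij, hiz]
      have hPinv : (∏ i ∈ (univ.erase j).erase z, 1/Real.sqrt ((k i:ℝ))) =
          (∏ i ∈ (univ.erase j).erase z, Real.sqrt ((k i:ℝ)))⁻¹ := by
        rw [← Finset.prod_inv_distrib]
        exact Finset.prod_congr rfl fun _ _ => one_div _
      have hL : 1 / (Real.sqrt (∏ i, (k i : ℝ)) * ((k z : ℝ) + 1)) =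
          (1/Real.sqrt ((k j:ℝ))) * (1/(Real.sqrt ((k z:ℝ)) * ((k z:ℝ)+1))) *
            ∏ i ∈ (univ.erase j).erase z, 1/Real.sqrt ((k i:ℝ)) := by
        rw [hsqrtprod k,
          ← Finset.mul_prod_erase univ (fun i => Real.sqrt ((k i:ℝ))) (Finset.mem_univ j),
          ← Finset.mul_prod_erase (univ.erase j) (fun i => Real.sqrt ((k i:ℝ))) hzmem, hPinv]
        simp only [one_div, mul_inv]
        ring
      rw [hL, hR]
      have hb1 : 1/Real.sqrt ((k j:ℝ)) ≤ Real.sqrt m / Real.sqrt n := by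
        rw [div_le_div_iff₀ hsjp (Real.sqrt_pos.2 hn0)]
        have hna : (n:ℝ) ≤ (m:ℝ)*((k j:ℝ)) := by exact_mod_cast hkj
        have h1 : Real.sqrt (n:ℝ) ≤ Real.sqrt ((m:ℝ)*(k j:ℝ)) := Real.sqrt_le_sqrt hna
        rw [Real.sqrt_mul (by positivity)] at h1
        linarith
      have hb2 : 1/(Real.sqrt ((k z:ℝ)) * ((k z:ℝ)+1)) ≤ 1/((k z:ℝ)*Real.sqrt ((k z:ℝ))) := by
        rw [div_le_div_iff₀ (mul_pos hszp (by linarith)) (mul_pos (by linarith) hszp)]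
        nlinarith [hszp.le]
      have hPn : (0:ℝ) ≤ ∏ i ∈ (univ.erase j).erase z, 1/Real.sqrt ((k i:ℝ)) :=
        Finset.prod_nonneg fun i _ => by positivity
      calc (1/Real.sqrt ((k j:ℝ))) * (1/(Real.sqrt ((k z:ℝ)) * ((k z:ℝ)+1))) *
            ∏ i ∈ (univ.erase j).erase z, 1/Real.sqrt ((k i:ℝ))
          ≤ ((Real.sqrt m / Real.sqrt n) * (1/((k z:ℝ)*Real.sqrt ((k z:ℝ))))) *
              ∏ i ∈ (univ.erase j).erase z, 1/Real.sqrt ((k i:ℝ)) :=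
            mul_le_mul_of_nonneg_right
              (mul_le_mul hb1 hb2 (by positivity) (by positivity)) hPn
        _ = (Real.sqrt m / Real.sqrt n) * ((1/((k z:ℝ)*Real.sqrt ((k z:ℝ)))) *
              ∏ i ∈ (univ.erase j).erase z, 1/Real.sqrt ((k i:ℝ))) := by ring
    have hsum2 : (∏ i, ∑ x ∈ Icc 1 n, G i x) ≤ 3 * (2*Real.sqrt n)^(m-2) := by
      rw [← Finset.mul_prod_erase univ _ (Finset.mem_univ j)]
      have h1 : (∑ x ∈ Icc 1 n, G j x) = 1 := by
        simp [hGdef, Finset.sum_ite_eq', Finset.mem_Icc, hn]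
      rw [h1, one_mul, ← Finset.mul_prod_erase (univ.erase j) _ hzmem]
      have h2 : (∑ x ∈ Icc 1 n, G z x) ≤ 3 := by
        have : ∀ x ∈ Icc 1 n, G z x = 1/((x:ℝ)*Real.sqrt x) := fun x _ => by
          simp [hGdef, hzj]
        rw [Finset.sum_congr rfl this]
        exact sum_inv_cube_le n
      have h3 : (∏ i ∈ (univ.erase j).erase z, ∑ x ∈ Icc 1 n, G i x) ≤
          (2*Real.sqrt n)^(m-2) := by
        calc ∏ i ∈ (univ.erase j).erase z, ∑ x ∈ Icc 1 n, G i x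
            ≤ ∏ _i ∈ (univ.erase j).erase z, (2*Real.sqrt n) := by
              refine Finset.prod_le_prod (fun i _ => Finset.sum_nonneg fun x _ => hG0 i x)
                (fun i hi => ?_)
              have hiz : i ≠ z := Finset.ne_of_mem_erase hi
              have hij : i ≠ j := Finset.ne_of_mem_erase (Finset.mem_of_mem_erase hi)
              have : ∀ x ∈ Icc 1 n, G i x = 1/Real.sqrt x := fun x _ => by
                simp [hGdef, hij, hiz]
              rw [Finset.sum_congr rfl this]
              exact sum_inv_sqrt_le n
          _ = (2*Real.sqrt n)^(m-2) := by
              rw [Finset.prod_const, Finset.card_erase_of_mem hzmem,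
                Finset.card_erase_of_mem (Finset.mem_univ j), Finset.card_univ,
                Fintype.card_fin, Nat.sub_sub]
      exact mul_le_mul h2 h3
        (Finset.prod_nonneg fun i _ => Finset.sum_nonneg fun x _ => hG0 i x) (by norm_num)
    have e2 : Real.sqrt (n:ℝ)^(m-2) = (n:ℝ)^((((m-2:ℕ)):ℝ)/2) := sqrt_pow_eq n (m-2)
    have e3 : (((m-2:ℕ)):ℝ) = (m:ℝ)-2 := by
      have h := Nat.cast_sub hm (R := ℝ)
      simpa using h
    calc (∑ k ∈ A.filter (fun k => n ≤ m * k j),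
          1 / (Real.sqrt (∏ i, (k i : ℝ)) * ((k z : ℝ) + 1)))
        ≤ ∑ k ∈ A.filter (fun k => n ≤ m * k j),
            (Real.sqrt m / Real.sqrt n) * ∏ i, G i (Function.update k j 1 i) :=
          Finset.sum_le_sum hpt
      _ = (Real.sqrt m / Real.sqrt n) *
            ∑ k ∈ A.filter (fun k => n ≤ m * k j), ∏ i, G i (Function.update k j 1 i) := by
          rw [← Finset.mul_sum]
      _ ≤ (Real.sqrt m / Real.sqrt n) * ∏ i, ∑ x ∈ Icc 1 n, G i x :=
          mul_le_mul_of_nonneg_left (sum_update_le_prod hn _ hAmem j G hG0) hc0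
      _ ≤ (Real.sqrt m / Real.sqrt n) * (3 * (2*Real.sqrt n)^(m-2)) :=
          mul_le_mul_of_nonneg_left hsum2 hc0
      _ = (3*Real.sqrt m*2^(m-2)) * ((n:ℝ)^(((m:ℝ)-2)/2) / (n:ℝ)^((1/2:ℝ))) := by
          rw [mul_pow, e2, e3, Real.sqrt_eq_rpow (n:ℝ)]; ring
      _ = (3*Real.sqrt m*2^(m-2)) * (n:ℝ)^(((m:ℝ)-2)/2 - 1/2) := by
          rw [← Real.rpow_sub hn0]
      _ = (3*Real.sqrt m*2^(m-2)) * (n:ℝ)^((m:ℝ)/2 - 3/2) := by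
          rw [show ((m:ℝ)-2)/2 - 1/2 = (m:ℝ)/2-3/2 by ring]
      _ ≤ (3 * m * Real.sqrt m * 2^(m-1)) * (n:ℝ) ^ ((m:ℝ)/2 - 3/2) := by
          apply mul_le_mul_of_nonneg_right ?_ (Real.rpow_nonneg hn0.le _)
          have h2 : (2:ℝ)^(m-2) ≤ 2^(m-1) := pow_le_pow_right₀ (by norm_num) (by omega)
          nlinarith [mul_nonneg (Real.sqrt_nonneg (m:ℝ)) (sub_nonneg.2 h2),
            mul_nonneg (mul_nonneg (sub_nonneg.2 hm1) (Real.sqrt_nonneg (m:ℝ)))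
              (pow_nonneg (by norm_num : (0:ℝ) ≤ 2) (m-1))]


/-- For fixed `m ≥ 2`, the correction sum over positive compositions of `n` into `m`
parts of `1/(√(k₁⋯k_m)(k₁+1))` is `O(n^(m/2 - 3/2))`. -/
theorem composition_correction_sum (m : ℕ) (hm : 2 ≤ m) :
    ∃ C : ℝ, 0 < C ∧ ∀ n : ℕ, 1 ≤ n →
      (∑ k ∈ (Finset.Nat.antidiagonalTuple m n).filter (fun k => ∀ i, 1 ≤ k i),
          1 / (Real.sqrt (∏ i, (k i : ℝ)) * ((k ⟨0, by omega⟩ : ℝ) + 1))) ≤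
        C * (n : ℝ) ^ ((m : ℝ) / 2 - 3/2) := by
  have hm0 : 0 < m := by omega
  set z : Fin m := ⟨0, hm0⟩ with hzdef
  refine ⟨m * (3 * m * Real.sqrt m * 2^(m-1)), by positivity, ?_⟩
  intro n hn
  have hn0 : (0:ℝ) < n := by exact_mod_cast hn
  have hn1 : (1:ℝ) ≤ n := by exact_mod_cast hn
  set A := (Finset.Nat.antidiagonalTuple m n).filter (fun k => ∀ i, 1 ≤ k i) with hAdef
  show (∑ k ∈ A, 1 / (Real.sqrt (∏ i, (k i : ℝ)) * ((k z : ℝ) + 1))) ≤ _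
  have hmem : ∀ k ∈ A, (∑ i, k i = n) ∧ ∀ i, 1 ≤ k i := by
    intro k hk
    rw [hAdef, Finset.mem_filter, Finset.Nat.mem_antidiagonalTuple] at hk
    exact hk
  have hf0 : ∀ k : Fin m → ℕ, 0 ≤ 1 / (Real.sqrt (∏ i, (k i : ℝ)) * ((k z : ℝ) + 1)) := by
    intro k; positivity
  have step2 : (∑ k ∈ A, 1 / (Real.sqrt (∏ i, (k i : ℝ)) * ((k z : ℝ) + 1))) ≤
      ∑ j : Fin m, ∑ k ∈ A.filter (fun k => n ≤ m * k j),
        1 / (Real.sqrt (∏ i, (k i : ℝ)) * ((k z : ℝ) + 1)) := by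
    have hpt : ∀ k ∈ A, 1 / (Real.sqrt (∏ i, (k i : ℝ)) * ((k z : ℝ) + 1)) ≤
        ∑ j : Fin m, if n ≤ m * k j then
          1 / (Real.sqrt (∏ i, (k i : ℝ)) * ((k z : ℝ) + 1)) else 0 := by
      intro k hk
      obtain ⟨hks, -⟩ := hmem k hk
      obtain ⟨j, -, hj⟩ := Finset.exists_max_image univ k ⟨z, Finset.mem_univ z⟩
      have hjn : n ≤ m * k j := by
        calc n = ∑ i, k i := hks.symm
          _ ≤ ∑ _i : Fin m, k j := Finset.sum_le_sum (fun i _ => hj i (Finset.mem_univ i))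
          _ = m * k j := by rw [Finset.sum_const, Finset.card_univ, Fintype.card_fin, smul_eq_mul]
      have := Finset.single_le_sum
        (f := fun j => if n ≤ m * k j then
          1 / (Real.sqrt (∏ i, (k i : ℝ)) * ((k z : ℝ) + 1)) else 0)
        (fun i _ => by split_ifs; exacts [hf0 k, le_rfl]) (Finset.mem_univ j)
      simpa [if_pos hjn] using this
    calc (∑ k ∈ A, 1 / (Real.sqrt (∏ i, (k i : ℝ)) * ((k z : ℝ) + 1)))
        ≤ ∑ k ∈ A, ∑ j : Fin m, (if n ≤ m * k j then
            1 / (Real.sqrt (∏ i, (k i : ℝ)) * ((k z : ℝ) + 1)) else 0) :=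
          Finset.sum_le_sum hpt
      _ = ∑ j : Fin m, ∑ k ∈ A, (if n ≤ m * k j then
            1 / (Real.sqrt (∏ i, (k i : ℝ)) * ((k z : ℝ) + 1)) else 0) := Finset.sum_comm
      _ = ∑ j : Fin m, ∑ k ∈ A.filter (fun k => n ≤ m * k j),
            1 / (Real.sqrt (∏ i, (k i : ℝ)) * ((k z : ℝ) + 1)) :=
          Finset.sum_congr rfl fun j _ => (Finset.sum_filter _ _).symm
  have step3 := aux_step3 m hm hm0 z n hn hn0 hn1 A hmem
  calc (∑ k ∈ A, 1 / (Real.sqrt (∏ i, (k i : ℝ)) * ((k z : ℝ) + 1)))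
      ≤ ∑ j : Fin m, ∑ k ∈ A.filter (fun k => n ≤ m * k j),
          1 / (Real.sqrt (∏ i, (k i : ℝ)) * ((k z : ℝ) + 1)) := step2
    _ ≤ ∑ _j : Fin m, (3 * m * Real.sqrt m * 2^(m-1)) * (n:ℝ) ^ ((m:ℝ)/2 - 3/2) :=
        Finset.sum_le_sum fun j _ => step3 j
    _ = m * (3 * m * Real.sqrt m * 2^(m-1)) * (n:ℝ) ^ ((m:ℝ)/2 - 3/2) := by
        rw [Finset.sum_const, Finset.card_univ, Fintype.card_fin, nsmul_eq_mul]; ring
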